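/- Let d ≥ 2 be an integer, let Ω be a finite set with |Ω| = d, and let a, b, c, e ∈ ℝ. Let K be the real d²×d² matrix with rows and columns indexed by Ω×Ω and entries K_{(x,y),(z,t)} = a·δ_{x,z} + b·δ_{y,t} + 2c·δ_{x,z}δ_{y,t} + e, where δ denotes the Kronecker delta. Then K is invertible if and only if c ≠ 0, d·a + 2c ≠ 0, d·b + 2c ≠ 0, and d·a + d·b + 2c + d²·e ≠ 0. -/

import Mathlib

open scoped InnerProductSpace

noncomputable section

theorem notUnit_of_kernel' {n : Type*} [Fintype n] [DecidableEq n] (M : Matrix n n ℝ)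
    (v : n → ℝ) (hv : v ≠ 0) (h : M.mulVec v = 0) : ¬ IsUnit M := by
  intro hu
  rw [Matrix.isUnit_iff_isUnit_det, isUnit_iff_ne_zero] at hu
  exact hu (Matrix.exists_mulVec_eq_zero_iff.mp ⟨v, hv, h⟩)

set_option maxHeartbeats 2000000 in
theorem K_matrix_invertible_iff
    {Ω : Type*} [Fintype Ω] [DecidableEq Ω]
    (d : ℕ) (hd : 2 ≤ d) (hcard : Fintype.card Ω = d)
    (a b c e : ℝ) (K : Matrix (Ω × Ω) (Ω × Ω) ℝ)
    (hK : ∀ x y z t : Ω, K (x, y) (z, t) =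
      a * (if x = z then 1 else 0) + b * (if y = t then 1 else 0)
        + 2 * c * ((if x = z then 1 else 0) * (if y = t then 1 else 0)) + e) :
    IsUnit K ↔ (c ≠ 0 ∧ (d : ℝ) * a + 2 * c ≠ 0 ∧ (d : ℝ) * b + 2 * c ≠ 0 ∧
      (d : ℝ) * a + (d : ℝ) * b + 2 * c + (d : ℝ) ^ 2 * e ≠ 0) := by
  have hn : (d : ℝ) ≠ 0 := by positivity
  obtain ⟨x₀, x₁, hne⟩ : ∃ u v : Ω, u ≠ v := by
    apply Fintype.exists_pair_of_one_lt_card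
    omega
  constructor
  · intro hu
    refine ⟨?_, ?_, ?_, ?_⟩
    · -- c ≠ 0
      intro h0
      refine notUnit_of_kernel' K
        (fun p => ((if p.1 = x₀ then (1:ℝ) else 0) - (if p.1 = x₁ then 1 else 0))
          * ((if p.2 = x₀ then (1:ℝ) else 0) - (if p.2 = x₁ then 1 else 0))) ?_ ?_ hu
      · intro hv
        have := congrFun hv (x₀, x₀)
        simp [hne] at this
      · funext q
        obtain ⟨x, y⟩ := q
        simp only [Matrix.mulVec, dotProduct, Pi.zero_apply]
        rw [Fintype.sum_prod_type]
        simp only [hK]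
        simp only [h0, mul_zero, zero_mul, add_zero, zero_add, add_mul, mul_add, mul_sub, sub_mul,
          Finset.sum_sub_distrib, Finset.sum_add_distrib, mul_ite, ite_mul, mul_one, mul_zero,
          one_mul, zero_mul, Finset.sum_ite_eq, Finset.sum_ite_eq', Finset.mem_univ, if_true,
          Finset.sum_const, Finset.card_univ, nsmul_eq_mul, Finset.mul_sum, Finset.sum_mul,
          Finset.sum_ite_irrel, sub_self]
        simp
    · -- d a + 2 c ≠ 0
      intro h0
      refine notUnit_of_kernel' K
        (fun p => ((if p.1 = x₀ then (1:ℝ) else 0) - (if p.1 = x₁ then 1 else 0))) ?_ ?_ hu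
      · intro hv
        have := congrFun hv (x₀, x₀)
        simp [hne] at this
      · funext q
        obtain ⟨x, y⟩ := q
        simp only [Matrix.mulVec, dotProduct, Pi.zero_apply]
        rw [Fintype.sum_prod_type]
        simp only [hK]
        simp only [add_mul, mul_add, mul_sub, sub_mul,
          Finset.sum_sub_distrib, Finset.sum_add_distrib, mul_ite, ite_mul, mul_one, mul_zero,
          one_mul, zero_mul, Finset.sum_ite_eq, Finset.sum_ite_eq', Finset.mem_univ, if_true,
          Finset.sum_const, Finset.card_univ, nsmul_eq_mul, Finset.mul_sum, Finset.sum_mul,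
          Finset.sum_ite_irrel, sub_self, hcard]
        by_cases hx0 : x = x₀ <;> by_cases hx1 : x = x₁ <;>
          simp [hx0, hx1, hne, hne.symm] <;> ring_nf <;> linarith [h0]
    · -- d b + 2 c ≠ 0
      intro h0
      refine notUnit_of_kernel' K
        (fun p => ((if p.2 = x₀ then (1:ℝ) else 0) - (if p.2 = x₁ then 1 else 0))) ?_ ?_ hu
      · intro hv
        have := congrFun hv (x₀, x₀)
        simp [hne] at this
      · funext q
        obtain ⟨x, y⟩ := q
        simp only [Matrix.mulVec, dotProduct, Pi.zero_apply]
        rw [Fintype.sum_prod_type]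
        simp only [hK]
        simp only [add_mul, mul_add, mul_sub, sub_mul,
          Finset.sum_sub_distrib, Finset.sum_add_distrib, mul_ite, ite_mul, mul_one, mul_zero,
          one_mul, zero_mul, Finset.sum_ite_eq, Finset.sum_ite_eq', Finset.mem_univ, if_true,
          Finset.sum_const, Finset.card_univ, nsmul_eq_mul, Finset.mul_sum, Finset.sum_mul,
          Finset.sum_ite_irrel, sub_self, hcard]
        by_cases hy0 : y = x₀ <;> by_cases hy1 : y = x₁ <;>
          simp [hy0, hy1, hne, hne.symm] <;> ring_nf <;> linarith [h0]
    · -- full sum ≠ 0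
      intro h0
      refine notUnit_of_kernel' K (fun _ => (1:ℝ)) ?_ ?_ hu
      · intro hv
        have := congrFun hv (x₀, x₀)
        simp at this
      · funext q
        obtain ⟨x, y⟩ := q
        simp only [Matrix.mulVec, dotProduct, Pi.zero_apply]
        rw [Fintype.sum_prod_type]
        simp only [hK]
        simp only [add_mul, mul_add, mul_one,
          Finset.sum_add_distrib, mul_ite, ite_mul, mul_zero,
          one_mul, zero_mul, Finset.sum_ite_eq, Finset.sum_ite_eq', Finset.mem_univ, if_true,
          Finset.sum_const, Finset.card_univ, nsmul_eq_mul, Finset.mul_sum, Finset.sum_mul,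
          Finset.sum_ite_irrel, hcard]
        ring_nf
        ring_nf at h0
        linarith [h0]
  · rintro ⟨h1, h2, h3, h4⟩
    set n : ℝ := (d : ℝ) with hnd
    set a' : ℝ := (1/(n*a+2*c) - 1/(2*c))/n with ha'
    set b' : ℝ := (1/(n*b+2*c) - 1/(2*c))/n with hb'
    set c' : ℝ := 1/(4*c) with hc'
    set e' : ℝ := (1/(n*a+n*b+2*c+n^2*e) - 1/(n*a+2*c) - 1/(n*b+2*c) + 1/(2*c))/n^2 with he'
    set L : Matrix (Ω × Ω) (Ω × Ω) ℝ := Matrix.of fun p q =>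
      a' * (if p.1 = q.1 then (1:ℝ) else 0) + b' * (if p.2 = q.2 then 1 else 0)
        + 2 * c' * ((if p.1 = q.1 then (1:ℝ) else 0) * (if p.2 = q.2 then 1 else 0)) + e'
      with hL
    have hmul : K * L = 1 := by
      ext ⟨x, y⟩ ⟨z, t⟩
      rw [Matrix.mul_apply]
      rw [Fintype.sum_prod_type]
      simp only [hK, hL, Matrix.of_apply]
      simp only [add_mul, mul_add, Finset.sum_add_distrib, mul_ite, ite_mul, mul_one, mul_zero,
        one_mul, zero_mul, Finset.sum_ite_eq, Finset.sum_ite_eq', Finset.mem_univ, if_true,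
        Finset.sum_const, Finset.card_univ, nsmul_eq_mul, Finset.mul_sum, Finset.sum_mul,
        Finset.sum_ite_irrel, hcard]
      rw [Matrix.one_apply]
      simp only [Prod.mk.injEq, ← hnd]
      by_cases hxz : x = z <;> by_cases hyt : y = t <;>
        simp only [hxz, hyt, if_true, if_false, and_true, and_false, true_and, false_and,
          if_pos, ite_true, ite_false] <;>
        rw [ha', hb', hc', he'] <;>
        (generalize hD4 : n * a + n * b + 2 * c + n ^ 2 * e = D4 at h4 ⊢
         generalize hD3 : n * b + 2 * c = D3 at h3 ⊢
         generalize hD2 : n * a + 2 * c = D2 at h2 ⊢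
         field_simp [h1, h2, h3, h4, hn]
         subst hD2 hD3 hD4
         ring)
    have : Invertible K := invertibleOfRightInverse K L hmul
    exact isUnit_of_invertible K
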